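/- Let δ > 0, R > 0, and R' ≥ 1. Let h ∈ (0,1] be such that M = 1/h is an integer. Then for every θ ∈ {−1,1}^{M^{p+q}} the following hold for the perturbed uniform density f_θ: (1) if the constant satisfies C₀ ≤ min{1, R'−1}·e^{p+q}, then f_θ is a probability density function and max{‖f_θ‖_∞, ‖f_{θ,1}‖_∞, ‖f_{θ,2}‖_∞} ≤ R', where f_{θ,1} and f_{θ,2} are the marginals of f_θ on ℝ^p and ℝ^q; (2) ‖f_θ − f_{θ,1}⊗f_{θ,2}‖_2 = C₀·‖G‖_2^{p+q}·h^δ. -/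

import Mathlib

open MeasureTheory ProbabilityTheory Real
open scoped BigOperators ENNReal

noncomputable section

/-- The measure with density `f` w.r.t. Lebesgue measure. -/
def densMeasure {E : Type*} [MeasureSpace E] (f : E → ℝ) : Measure E :=
  volume.withDensity fun z => ENNReal.ofReal (f z)

/-- The law `P_f` of an i.i.d. `n`-sample with common density `f`. -/
def sampleLaw (n : ℕ) {E : Type*} [MeasureSpace E] (f : E → ℝ) : Measure (Fin n → E) :=
  Measure.pi fun _ => densMeasure f

/-- First marginal density of a density on `ℝ^p × ℝ^q`. -/
def marg1 (p q : ℕ) (f : (Fin p → ℝ) × (Fin q → ℝ) → ℝ) (x : Fin p → ℝ) : ℝ :=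
  ∫ y, f (x, y)

/-- Second marginal density of a density on `ℝ^p × ℝ^q`. -/
def marg2 (p q : ℕ) (f : (Fin p → ℝ) × (Fin q → ℝ) → ℝ) (y : Fin q → ℝ) : ℝ :=
  ∫ x, f (x, y)

/-- `ψ = f − f_1 ⊗ f_2`. -/
def psiOf (p q : ℕ) (f : (Fin p → ℝ) × (Fin q → ℝ) → ℝ) :
    (Fin p → ℝ) × (Fin q → ℝ) → ℝ :=
  fun z => f z - marg1 p q f z.1 * marg2 p q f z.2

/-- The function `G` of the lower-bound construction. -/
def Gfun (t : ℝ) : ℝ :=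
  (if -1 < t ∧ t < -(1/2) then Real.exp (-1 / (1 - (4*t+3) ^ 2)) else 0)
  - (if -(1/2) < t ∧ t < 0 then Real.exp (-1 / (1 - (4*t+1) ^ 2)) else 0)

/-- The rescaled function `G_h(t) = (1/h)·G(t/h)`. -/
def Gscale (h t : ℝ) : ℝ := (1 / h) * Gfun (t / h)

/-- The perturbed uniform density `f_θ` on `[0,1]^{p+q}`, with perturbation scale `h = 1/M`,
regularity exponent `δ`, amplitude `C₀` and sign vector `θ`. -/
def fTheta (p q : ℕ) (δ C0 h : ℝ) (M : ℕ)
    (θ : (Fin p → Fin M) × (Fin q → Fin M) → ℝ)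
    (z : (Fin p → ℝ) × (Fin q → ℝ)) : ℝ :=
  (if (∀ r, 0 ≤ z.1 r ∧ z.1 r ≤ 1) ∧ (∀ s, 0 ≤ z.2 s ∧ z.2 s ≤ 1) then (1:ℝ) else 0)
  + C0 * h ^ (δ + ((p : ℝ) + q)) *
    ∑ jl : (Fin p → Fin M) × (Fin q → Fin M),
      θ jl * (∏ r, Gscale h (z.1 r - (((jl.1 r : ℕ) : ℝ) + 1) * h)) *
             (∏ s, Gscale h (z.2 s - (((jl.2 s : ℕ) : ℝ) + 1) * h))

/-- auxiliary bump -/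
def Abump (t : ℝ) : ℝ := if -1 < t ∧ t < -(1/2) then Real.exp (-1 / (1 - (4*t+3) ^ 2)) else 0

lemma Abump_nonneg (t : ℝ) : 0 ≤ Abump t := by
  unfold Abump; split <;> positivity

lemma Abump_le (t : ℝ) : Abump t ≤ Real.exp (-1) := by
  unfold Abump; split
  · rename_i hc
    apply Real.exp_le_exp.2
    have h1 : (4*t+3)^2 < 1 := by nlinarith [hc.1, hc.2]
    have h2 : 0 < 1 - (4*t+3)^2 := by linarith
    rw [neg_div, neg_le_neg_iff]
    rw [le_div_iff₀ h2]; nlinarith [sq_nonneg (4*t+3)]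
  · positivity

lemma Gfun_eq_shift (t : ℝ) : Gfun t = Abump t - Abump (t - 1/2) := by
  unfold Gfun Abump
  congr 1
  by_cases h1 : -(1/2) < t ∧ t < 0
  · rw [if_pos h1, if_pos ⟨by linarith [h1.1], by linarith [h1.2]⟩]
    have : 4*(t-1/2)+3 = 4*t+1 := by ring
    rw [this]
  · rw [if_neg h1, if_neg (fun hc => h1 ⟨by linarith [hc.1], by linarith [hc.2]⟩)]

lemma abs_Gfun_le (t : ℝ) : |Gfun t| ≤ Real.exp (-1) := by
  rw [Gfun_eq_shift, abs_sub_le_iff]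
  constructor
  · linarith [Abump_le t, Abump_nonneg (t - 1/2)]
  · linarith [Abump_le (t - 1/2), Abump_nonneg t]

lemma Gfun_support {t : ℝ} (ht : Gfun t ≠ 0) : -1 < t ∧ t < 0 := by
  by_contra hc
  push_neg at hc
  apply ht
  unfold Gfun
  rw [if_neg, if_neg, sub_zero]
  · rintro ⟨h1, h2⟩
    have := hc (by linarith)
    linarith
  · rintro ⟨h1, h2⟩
    have := hc h1
    linarith

lemma measurable_Abump : Measurable Abump := by
  unfold Abump
  apply Measurable.ite
  · show MeasurableSet {t : ℝ | -1 < t ∧ t < -(1/2)}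
    have : {t : ℝ | -1 < t ∧ t < -(1/2)} = Set.Ioo (-1) (-(1/2)) := rfl
    rw [this]; exact measurableSet_Ioo
  · fun_prop
  · exact measurable_const

lemma measurable_Gfun : Measurable Gfun := by
  have : Gfun = fun t => Abump t - Abump (t - 1/2) := funext Gfun_eq_shift
  rw [this]
  exact measurable_Abump.sub (measurable_Abump.comp (measurable_id.sub measurable_const))

/-- Integrability of a bounded compactly supported measurable function. -/
lemma integrable_of_bdd_supp (f : ℝ → ℝ) (hf : Measurable f) (a b C : ℝ) (hC : 0 ≤ C)
    (hbd : ∀ t, |f t| ≤ C) (hsupp : ∀ t, f t ≠ 0 → a ≤ t ∧ t ≤ b) : Integrable f := by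
  have hind : Integrable (Set.indicator (Set.Icc a b) (fun _ => C)) := by
    rw [integrable_indicator_iff measurableSet_Icc]
    exact integrableOn_const (by rw [Real.volume_Icc]; exact ENNReal.ofReal_ne_top)
  refine hind.mono' hf.aestronglyMeasurable (Filter.Eventually.of_forall fun t => ?_)
  by_cases ht : t ∈ Set.Icc a b
  · rw [Set.indicator_of_mem ht]; exact hbd t
  · rw [Set.indicator_of_notMem ht]
    have : f t = 0 := by
      by_contra hne
      exact ht ⟨(hsupp t hne).1, (hsupp t hne).2⟩
    simp [this]

lemma integrable_Gfun : Integrable Gfun :=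
  integrable_of_bdd_supp Gfun measurable_Gfun (-1) 0 (Real.exp (-1)) (Real.exp_pos _).le
    abs_Gfun_le (fun t ht => ⟨(Gfun_support ht).1.le, (Gfun_support ht).2.le⟩)

lemma integral_Gfun : (∫ t, Gfun t) = 0 := by
  have hA : Integrable Abump :=
    integrable_of_bdd_supp Abump measurable_Abump (-1) 0 (Real.exp (-1)) (Real.exp_pos _).le
      (fun t => by rw [abs_of_nonneg (Abump_nonneg t)]; exact Abump_le t)
      (fun t ht => by
        unfold Abump at ht
        by_cases hc : -1 < t ∧ t < -(1/2)
        · exact ⟨hc.1.le, by linarith [hc.2]⟩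
        · exact absurd (if_neg hc) ht)
  have : (fun t => Gfun t) = fun t => Abump t - Abump (t - 1/2) := funext Gfun_eq_shift
  rw [this, integral_sub hA (by simpa using hA.comp_sub_right (1/2)),
    integral_sub_right_eq_self Abump (1/2), sub_self]

section Scale

variable {h : ℝ} (hpos : 0 < h)
include hpos

lemma measurable_Gscale_shift (c : ℝ) : Measurable (fun t => Gscale h (t - c)) := by
  unfold Gscale
  exact (measurable_Gfun.comp ((measurable_id.sub measurable_const).div_const h)).const_mul _

lemma abs_Gscale_shift_le (c t : ℝ) : |Gscale h (t - c)| ≤ (1/h) * Real.exp (-1) := by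
  unfold Gscale
  rw [abs_mul, abs_of_nonneg (by positivity : (0:ℝ) ≤ 1/h)]
  exact mul_le_mul_of_nonneg_left (abs_Gfun_le _) (by positivity)

lemma Gscale_shift_support {c t : ℝ} (ht : Gscale h (t - c) ≠ 0) : c - h < t ∧ t < c := by
  unfold Gscale at ht
  have hG : Gfun ((t - c)/h) ≠ 0 := by
    intro hz; apply ht; rw [hz, mul_zero]
  obtain ⟨h1, h2⟩ := Gfun_support hG
  rw [div_lt_iff₀ hpos, lt_div_iff₀ hpos] at *
  constructor <;> nlinarith

lemma integrable_Gscale_shift (c : ℝ) : Integrable (fun t => Gscale h (t - c)) := by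
  refine integrable_of_bdd_supp _ (measurable_Gscale_shift hpos c) (c - h) c
    ((1/h) * Real.exp (-1)) (by positivity) (abs_Gscale_shift_le hpos c) (fun t ht => ?_)
  exact ⟨(Gscale_shift_support hpos ht).1.le, (Gscale_shift_support hpos ht).2.le⟩

lemma integral_Gscale_shift (c : ℝ) : (∫ t, Gscale h (t - c)) = 0 := by
  rw [integral_sub_right_eq_self (fun t => Gscale h t) c]
  unfold Gscale
  rw [integral_const_mul, Measure.integral_comp_div Gfun h, integral_Gfun]
  simp

lemma integrable_Gscale_shift_sq (c : ℝ) : Integrable (fun t => Gscale h (t - c) ^ 2) := by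
  refine integrable_of_bdd_supp _ ((measurable_Gscale_shift hpos c).pow_const 2) (c - h) c
    (((1/h) * Real.exp (-1)) ^ 2) (by positivity) (fun t => ?_) (fun t ht => ?_)
  · rw [abs_pow]
    exact pow_le_pow_left₀ (abs_nonneg _) (abs_Gscale_shift_le hpos c t) 2
  · have : Gscale h (t - c) ≠ 0 := fun hz => ht (by rw [hz]; ring)
    exact ⟨(Gscale_shift_support hpos this).1.le, (Gscale_shift_support hpos this).2.le⟩

lemma integral_Gscale_shift_sq (c : ℝ) :
    (∫ t, Gscale h (t - c) ^ 2) = (1/h) * ∫ t, Gfun t ^ 2 := by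
  rw [integral_sub_right_eq_self (fun t => Gscale h t ^ 2) c]
  unfold Gscale
  have : (fun t : ℝ => ((1/h) * Gfun (t/h)) ^ 2) = fun t => (1/h)^2 * Gfun (t/h) ^ 2 := by
    funext t; ring
  rw [this, integral_const_mul, Measure.integral_comp_div (fun t => Gfun t ^ 2) h,
    abs_of_pos hpos, smul_eq_mul]
  field_simp

end Scale

/-- The `j`-th translate used in the construction. -/
def gM (h : ℝ) {M : ℕ} (j : Fin M) (t : ℝ) : ℝ := Gscale h (t - (((j : ℕ) : ℝ) + 1) * h)

section GM

variable {h : ℝ} (hpos : 0 < h) {M : ℕ}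
include hpos

lemma gM_support {j : Fin M} {t : ℝ} (ht : gM h j t ≠ 0) :
    ((j : ℕ) : ℝ) * h < t ∧ t < (((j : ℕ) : ℝ) + 1) * h := by
  obtain ⟨h1, h2⟩ := Gscale_shift_support hpos ht
  constructor <;> nlinarith

lemma gM_unique {j j' : Fin M} {t : ℝ} (hj : gM h j t ≠ 0) (hj' : gM h j' t ≠ 0) : j = j' := by
  obtain ⟨a1, a2⟩ := gM_support hpos hj
  obtain ⟨b1, b2⟩ := gM_support hpos hj'
  have h1 : ((j : ℕ) : ℝ) < ((j' : ℕ) : ℝ) + 1 := by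
    have := a1.trans b2
    exact lt_of_mul_lt_mul_right this hpos.le
  have h2 : ((j' : ℕ) : ℝ) < ((j : ℕ) : ℝ) + 1 := by
    have := b1.trans a2
    exact lt_of_mul_lt_mul_right this hpos.le
  have h1' : (j : ℕ) < (j' : ℕ) + 1 := by exact_mod_cast h1
  have h2' : (j' : ℕ) < (j : ℕ) + 1 := by exact_mod_cast h2
  exact Fin.ext (by omega)

lemma gM_mul_eq_zero {j j' : Fin M} (hne : j ≠ j') (t : ℝ) : gM h j t * gM h j' t = 0 := by
  by_contra hc
  have hj : gM h j t ≠ 0 := fun hz => hc (by rw [hz, zero_mul])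
  have hj' : gM h j' t ≠ 0 := fun hz => hc (by rw [hz, mul_zero])
  exact hne (gM_unique hpos hj hj')

lemma gM_mem_unit (hMh : (M : ℝ) * h = 1) {j : Fin M} {t : ℝ} (ht : gM h j t ≠ 0) :
    0 ≤ t ∧ t ≤ 1 := by
  obtain ⟨h1, h2⟩ := gM_support hpos ht
  have hj : ((j : ℕ) : ℝ) + 1 ≤ (M : ℝ) := by
    have : (j : ℕ) + 1 ≤ M := j.2
    exact_mod_cast this
  constructor
  · have : (0:ℝ) ≤ ((j : ℕ) : ℝ) * h := by positivity
    linarith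
  · have : (((j : ℕ) : ℝ) + 1) * h ≤ (M : ℝ) * h := by
      exact mul_le_mul_of_nonneg_right hj hpos.le
    rw [hMh] at this
    linarith

lemma integral_gM_mul {j j' : Fin M} :
    (∫ t, gM h j t * gM h j' t) =
      if j = j' then (1/h) * ∫ t, Gfun t ^ 2 else 0 := by
  by_cases hjj : j = j'
  · subst hjj
    rw [if_pos rfl, ← integral_Gscale_shift_sq hpos ((((j : ℕ) : ℝ) + 1) * h)]
    congr 1; funext t; rw [sq]; rfl
  · rw [if_neg hjj]
    have : (fun t => gM h j t * gM h j' t) = fun _ => (0:ℝ) :=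
      funext (gM_mul_eq_zero hpos hjj)
    rw [this, integral_zero]

lemma integrable_gM (j : Fin M) : Integrable (gM h j) := integrable_Gscale_shift hpos _

lemma integrable_gM_mul (j j' : Fin M) : Integrable (fun t => gM h j t * gM h j' t) := by
  refine (integrable_gM hpos j').bdd_mul (measurable_Gscale_shift hpos _).aestronglyMeasurable
    (c := (1/h) * Real.exp (-1)) (Filter.Eventually.of_forall fun t => ?_)
  exact (abs_Gscale_shift_le hpos _ t)

end GM

/-- A sum over a finite type with at most one nonzero term is bounded by a bound on terms. -/
lemma abs_sum_le_of_unique {ι : Type*} [Fintype ι] (f : ι → ℝ) (B : ℝ) (hB0 : 0 ≤ B)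
    (hB : ∀ i, |f i| ≤ B) (hu : ∀ i i', f i ≠ 0 → f i' ≠ 0 → i = i') :
    |∑ i, f i| ≤ B := by
  by_cases hz : ∀ i, f i = 0
  · rw [Finset.sum_eq_zero (fun i _ => hz i), abs_zero]; exact hB0
  · push_neg at hz
    obtain ⟨i0, hi0⟩ := hz
    rw [Finset.sum_eq_single i0 (fun i _ hne => by
        by_contra hc
        exact hne (hu i i0 hc hi0)) (fun hmem => absurd (Finset.mem_univ i0) hmem)]
    exact hB i0

/-- indicator of `[0,1]` -/
def ind01 (t : ℝ) : ℝ := if 0 ≤ t ∧ t ≤ 1 then 1 else 0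

lemma ind01_nonneg (t : ℝ) : 0 ≤ ind01 t := by unfold ind01; split <;> norm_num

lemma ind01_le_one (t : ℝ) : ind01 t ≤ 1 := by unfold ind01; split <;> norm_num

lemma measurable_ind01 : Measurable ind01 := by
  unfold ind01
  apply Measurable.ite _ measurable_const measurable_const
  show MeasurableSet {t : ℝ | 0 ≤ t ∧ t ≤ 1}
  have : {t : ℝ | 0 ≤ t ∧ t ≤ 1} = Set.Icc 0 1 := rfl
  rw [this]; exact measurableSet_Icc

lemma integrable_ind01 : Integrable ind01 := by
  refine integrable_of_bdd_supp _ measurable_ind01 0 1 1 one_pos.le (fun t => ?_) (fun t ht => ?_)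
  · rw [abs_of_nonneg (ind01_nonneg t)]; exact ind01_le_one t
  · unfold ind01 at ht
    by_cases hc : 0 ≤ t ∧ t ≤ 1
    · exact hc
    · exact absurd (if_neg hc) ht

lemma integral_ind01 : (∫ t, ind01 t) = 1 := by
  have : ind01 = Set.indicator (Set.Icc (0:ℝ) 1) (fun _ => (1:ℝ)) := by
    funext t
    by_cases hc : 0 ≤ t ∧ t ≤ 1
    · rw [Set.indicator_of_mem (Set.mem_Icc.2 hc)]; exact if_pos hc
    · rw [Set.indicator_of_notMem (fun hm => hc (Set.mem_Icc.1 hm))]; exact if_neg hc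
  rw [this, integral_indicator_const (1:ℝ) measurableSet_Icc]
  simp [Real.volume_Icc]

lemma prod_ind01 {n : ℕ} (x : Fin n → ℝ) :
    (∏ r, ind01 (x r)) = if ∀ r, 0 ≤ x r ∧ x r ≤ 1 then 1 else 0 := by
  by_cases hc : ∀ r, 0 ≤ x r ∧ x r ≤ 1
  · rw [if_pos hc]
    exact Finset.prod_eq_one (fun r _ => if_pos (hc r))
  · rw [if_neg hc]
    push_neg at hc
    obtain ⟨r, hr⟩ := hc
    refine Finset.prod_eq_zero (Finset.mem_univ r) ?_
    unfold ind01
    rw [if_neg]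
    intro hcc
    exact absurd hcc.2 (not_le.2 (hr hcc.1))

/-- The summand of the perturbation. -/
def Fterm (p q : ℕ) (h : ℝ) (M : ℕ) (θ : (Fin p → Fin M) × (Fin q → Fin M) → ℝ)
    (jl : (Fin p → Fin M) × (Fin q → Fin M)) (z : (Fin p → ℝ) × (Fin q → ℝ)) : ℝ :=
  θ jl * (∏ r, gM h (jl.1 r) (z.1 r)) * (∏ s, gM h (jl.2 s) (z.2 s))

lemma fTheta_eq (p q : ℕ) (δ C0 h : ℝ) (M : ℕ) (θ : (Fin p → Fin M) × (Fin q → Fin M) → ℝ)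
    (z : (Fin p → ℝ) × (Fin q → ℝ)) :
    fTheta p q δ C0 h M θ z =
      (∏ r, ind01 (z.1 r)) * (∏ s, ind01 (z.2 s)) +
        C0 * h ^ (δ + ((p : ℝ) + q)) * ∑ jl, Fterm p q h M θ jl z := by
  unfold fTheta Fterm gM
  congr 1
  rw [prod_ind01, prod_ind01]
  by_cases hA : ∀ r, 0 ≤ z.1 r ∧ z.1 r ≤ 1 <;> by_cases hB : ∀ s, 0 ≤ z.2 s ∧ z.2 s ≤ 1 <;>
    simp [hA, hB]

section Fterm

variable {p q : ℕ} {h : ℝ} (hpos : 0 < h) {M : ℕ}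
  {θ : (Fin p → Fin M) × (Fin q → Fin M) → ℝ} (hθ : ∀ jl, θ jl = 1 ∨ θ jl = -1)

include hθ hpos

lemma abs_Fterm_le (jl) (z) :
    |Fterm p q h M θ jl z| ≤ ((1/h) * Real.exp (-1)) ^ (p + q) := by
  unfold Fterm
  have hθ1 : |θ jl| = 1 := by rcases hθ jl with h1 | h1 <;> rw [h1] <;> norm_num
  rw [abs_mul, abs_mul, hθ1, one_mul, Finset.abs_prod, Finset.abs_prod, pow_add]
  have hb : (0:ℝ) ≤ (1/h) * Real.exp (-1) := by positivity
  have h1 : (∏ r, |gM h (jl.1 r) (z.1 r)|) ≤ ((1/h) * Real.exp (-1)) ^ p := by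
    calc (∏ r, |gM h (jl.1 r) (z.1 r)|) ≤ ∏ _r : Fin p, (1/h) * Real.exp (-1) :=
          Finset.prod_le_prod (fun r _ => abs_nonneg _)
            (fun r _ => abs_Gscale_shift_le hpos _ _)
      _ = ((1/h) * Real.exp (-1)) ^ p := by
          rw [Finset.prod_const, Finset.card_univ, Fintype.card_fin]
  have h2 : (∏ s, |gM h (jl.2 s) (z.2 s)|) ≤ ((1/h) * Real.exp (-1)) ^ q := by
    calc (∏ s, |gM h (jl.2 s) (z.2 s)|) ≤ ∏ _s : Fin q, (1/h) * Real.exp (-1) :=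
          Finset.prod_le_prod (fun s _ => abs_nonneg _)
            (fun s _ => abs_Gscale_shift_le hpos _ _)
      _ = ((1/h) * Real.exp (-1)) ^ q := by
          rw [Finset.prod_const, Finset.card_univ, Fintype.card_fin]
  exact mul_le_mul h1 h2 (Finset.prod_nonneg (fun s _ => abs_nonneg _)) (by positivity)

omit hθ in
lemma Fterm_unique {z} {jl jl'} (h1 : Fterm p q h M θ jl z ≠ 0)
    (h2 : Fterm p q h M θ jl' z ≠ 0) : jl = jl' := by
  unfold Fterm at h1 h2
  have e1 : ∀ r, gM h (jl.1 r) (z.1 r) ≠ 0 := by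
    intro r hr
    exact h1 (by rw [Finset.prod_eq_zero (Finset.mem_univ r) hr, mul_zero, zero_mul])
  have e2 : ∀ s, gM h (jl.2 s) (z.2 s) ≠ 0 := by
    intro s hs
    exact h1 (by rw [Finset.prod_eq_zero (Finset.mem_univ s) hs, mul_zero])
  have e1' : ∀ r, gM h (jl'.1 r) (z.1 r) ≠ 0 := by
    intro r hr
    exact h2 (by rw [Finset.prod_eq_zero (Finset.mem_univ r) hr, mul_zero, zero_mul])
  have e2' : ∀ s, gM h (jl'.2 s) (z.2 s) ≠ 0 := by
    intro s hs
    exact h2 (by rw [Finset.prod_eq_zero (Finset.mem_univ s) hs, mul_zero])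
  exact Prod.ext (funext fun r => gM_unique hpos (e1 r) (e1' r))
    (funext fun s => gM_unique hpos (e2 s) (e2' s))

omit hθ in
lemma Fterm_supp (hMh : (M : ℝ) * h = 1) {z jl} (hne : Fterm p q h M θ jl z ≠ 0) :
    (∀ r, 0 ≤ z.1 r ∧ z.1 r ≤ 1) ∧ (∀ s, 0 ≤ z.2 s ∧ z.2 s ≤ 1) := by
  unfold Fterm at hne
  have e1 : ∀ r, gM h (jl.1 r) (z.1 r) ≠ 0 := by
    intro r hr
    exact hne (by rw [Finset.prod_eq_zero (Finset.mem_univ r) hr, mul_zero, zero_mul])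
  have e2 : ∀ s, gM h (jl.2 s) (z.2 s) ≠ 0 := by
    intro s hs
    exact hne (by rw [Finset.prod_eq_zero (Finset.mem_univ s) hs, mul_zero])
  exact ⟨fun r => gM_mem_unit hpos hMh (e1 r), fun s => gM_mem_unit hpos hMh (e2 s)⟩

lemma abs_sum_Fterm_le (z) :
    |∑ jl, Fterm p q h M θ jl z| ≤ ((1/h) * Real.exp (-1)) ^ (p + q) :=
  abs_sum_le_of_unique _ _ (by positivity) (fun jl => abs_Fterm_le hpos hθ jl z)
    (fun i i' hi hi' => Fterm_unique hpos hi hi')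

end Fterm


section ProdInt

lemma integrable_mul_prod {p q : ℕ} {f : (Fin p → ℝ) → ℝ} {g : (Fin q → ℝ) → ℝ}
    (hf : Integrable f) (hg : Integrable g) :
    Integrable (fun z : (Fin p → ℝ) × (Fin q → ℝ) => f z.1 * g z.2) := by
  rw [Measure.volume_eq_prod]
  exact hf.mul_prod hg

lemma integral_mul_prod {p q : ℕ} (f : (Fin p → ℝ) → ℝ) (g : (Fin q → ℝ) → ℝ) :
    (∫ z : (Fin p → ℝ) × (Fin q → ℝ), f z.1 * g z.2) = (∫ x, f x) * ∫ y, g y := by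
  rw [Measure.volume_eq_prod, integral_prod_mul]

variable {p q : ℕ} {h : ℝ} (hpos : 0 < h) {M : ℕ}
  {θ : (Fin p → Fin M) × (Fin q → Fin M) → ℝ}

lemma integrable_ind_pi {n : ℕ} : Integrable (fun x : Fin n → ℝ => ∏ r, ind01 (x r)) :=
  Integrable.fintype_prod (fun _ => integrable_ind01)

lemma integral_ind_pi {n : ℕ} : (∫ x : Fin n → ℝ, ∏ r, ind01 (x r)) = 1 := by
  rw [MeasureTheory.integral_fintype_prod_volume_eq_prod (f := fun _ : Fin n => ind01)]
  exact Finset.prod_eq_one (fun r _ => integral_ind01)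

include hpos

lemma integrable_gM_pi {n : ℕ} (j : Fin n → Fin M) :
    Integrable (fun x : Fin n → ℝ => ∏ r, gM h (j r) (x r)) :=
  Integrable.fintype_prod (fun r => integrable_gM hpos (j r))

lemma integral_gM_pi {n : ℕ} (hn : 0 < n) (j : Fin n → Fin M) :
    (∫ x : Fin n → ℝ, ∏ r, gM h (j r) (x r)) = 0 := by
  rw [MeasureTheory.integral_fintype_prod_volume_eq_prod (f := fun r => gM h (j r))]
  exact Finset.prod_eq_zero (Finset.mem_univ ⟨0, hn⟩) (integral_Gscale_shift hpos _)

lemma integrable_Fterm (jl) : Integrable (Fterm p q h M θ jl) := by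
  have : Fterm p q h M θ jl = fun z =>
      θ jl * ((∏ r, gM h (jl.1 r) (z.1 r)) * (∏ s, gM h (jl.2 s) (z.2 s))) := by
    funext z; unfold Fterm; ring
  rw [this]
  exact (integrable_mul_prod (integrable_gM_pi hpos jl.1) (integrable_gM_pi hpos jl.2)).const_mul _

lemma integral_Fterm (hp : 0 < p) (jl) : (∫ z, Fterm p q h M θ jl z) = 0 := by
  have : Fterm p q h M θ jl = fun z =>
      θ jl * ((∏ r, gM h (jl.1 r) (z.1 r)) * (∏ s, gM h (jl.2 s) (z.2 s))) := by
    funext z; unfold Fterm; ring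
  rw [this, integral_const_mul,
    integral_mul_prod (fun x => ∏ r, gM h (jl.1 r) (x r)) (fun y => ∏ s, gM h (jl.2 s) (y s)),
    integral_gM_pi hpos hp jl.1]
  ring

lemma integrable_gM_mul_pi {n : ℕ} (j j' : Fin n → Fin M) :
    Integrable (fun x : Fin n → ℝ => ∏ r, gM h (j r) (x r) * gM h (j' r) (x r)) :=
  Integrable.fintype_prod (fun r => integrable_gM_mul hpos (j r) (j' r))

lemma integral_gM_mul_pi {n : ℕ} (j j' : Fin n → Fin M) :
    (∫ x : Fin n → ℝ, ∏ r, gM h (j r) (x r) * gM h (j' r) (x r)) =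
      if j = j' then ((1/h) * ∫ t, Gfun t ^ 2) ^ n else 0 := by
  rw [MeasureTheory.integral_fintype_prod_volume_eq_prod
    (f := fun r => fun t => gM h (j r) t * gM h (j' r) t)]
  by_cases hjj : j = j'
  · subst hjj
    rw [if_pos rfl]
    have : ∀ r : Fin n, (∫ t, gM h (j r) t * gM h (j r) t) = (1/h) * ∫ t, Gfun t ^ 2 := by
      intro r
      rw [integral_gM_mul hpos, if_pos rfl]
    rw [Finset.prod_congr rfl (fun r _ => this r), Finset.prod_const, Finset.card_univ,
      Fintype.card_fin]
  · rw [if_neg hjj]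
    push_neg at hjj
    rw [Function.ne_iff] at hjj
    obtain ⟨r, hr⟩ := hjj
    refine Finset.prod_eq_zero (Finset.mem_univ r) ?_
    rw [integral_gM_mul hpos, if_neg hr]

lemma integrable_Fterm_mul (jl jl') :
    Integrable (fun z => Fterm p q h M θ jl z * Fterm p q h M θ jl' z) := by
  have : (fun z => Fterm p q h M θ jl z * Fterm p q h M θ jl' z) = fun z =>
      (θ jl * θ jl') *
        ((∏ r, gM h (jl.1 r) (z.1 r) * gM h (jl'.1 r) (z.1 r)) *
         (∏ s, gM h (jl.2 s) (z.2 s) * gM h (jl'.2 s) (z.2 s))) := by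
    funext z
    unfold Fterm
    rw [Finset.prod_mul_distrib, Finset.prod_mul_distrib]
    ring
  rw [this]
  exact (integrable_mul_prod (integrable_gM_mul_pi hpos _ _)
    (integrable_gM_mul_pi hpos _ _)).const_mul _

lemma integral_Fterm_mul (hθ : ∀ jl, θ jl = 1 ∨ θ jl = -1) (jl jl') :
    (∫ z, Fterm p q h M θ jl z * Fterm p q h M θ jl' z) =
      if jl = jl' then ((1/h) * ∫ t, Gfun t ^ 2) ^ (p + q) else 0 := by
  have : (fun z => Fterm p q h M θ jl z * Fterm p q h M θ jl' z) = fun z =>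
      (θ jl * θ jl') *
        ((∏ r, gM h (jl.1 r) (z.1 r) * gM h (jl'.1 r) (z.1 r)) *
         (∏ s, gM h (jl.2 s) (z.2 s) * gM h (jl'.2 s) (z.2 s))) := by
    funext z
    unfold Fterm
    rw [Finset.prod_mul_distrib, Finset.prod_mul_distrib]
    ring
  rw [this, integral_const_mul,
    integral_mul_prod (fun x => ∏ r, gM h (jl.1 r) (x r) * gM h (jl'.1 r) (x r))
      (fun y => ∏ s, gM h (jl.2 s) (y s) * gM h (jl'.2 s) (y s)),
    integral_gM_mul_pi hpos, integral_gM_mul_pi hpos]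
  by_cases hjj : jl = jl'
  · subst hjj
    rw [if_pos rfl, if_pos rfl, if_pos rfl]
    have : θ jl * θ jl = 1 := by rcases hθ jl with h1 | h1 <;> rw [h1] <;> norm_num
    rw [this, one_mul, ← pow_add]
  · rw [if_neg hjj]
    have : jl.1 ≠ jl'.1 ∨ jl.2 ≠ jl'.2 := by
      by_contra hc
      push_neg at hc
      exact hjj (Prod.ext hc.1 hc.2)
    rcases this with hne | hne
    · rw [if_neg hne]; ring
    · rw [if_neg hne]; ring

end ProdInt

section Main

variable {p q : ℕ} {δ C0 h : ℝ} (hpos : 0 < h) {M : ℕ}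
  {θ : (Fin p → Fin M) × (Fin q → Fin M) → ℝ}

include hpos

lemma integrable_fTheta (hp : 0 < p) (hq : 0 < q) :
    Integrable (fTheta p q δ C0 h M θ) := by
  have : fTheta p q δ C0 h M θ = fun z =>
      ((∏ r, ind01 (z.1 r)) * (∏ s, ind01 (z.2 s)) +
        C0 * h ^ (δ + ((p : ℝ) + q)) * ∑ jl, Fterm p q h M θ jl z) :=
    funext (fTheta_eq p q δ C0 h M θ)
  rw [this]
  exact (integrable_mul_prod integrable_ind_pi integrable_ind_pi).add
    ((integrable_finset_sum _ (fun jl _ => integrable_Fterm hpos jl)).const_mul _)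

lemma integral_fTheta (hp : 0 < p) (hq : 0 < q) :
    (∫ z, fTheta p q δ C0 h M θ z) = 1 := by
  have : fTheta p q δ C0 h M θ = fun z =>
      ((∏ r, ind01 (z.1 r)) * (∏ s, ind01 (z.2 s)) +
        C0 * h ^ (δ + ((p : ℝ) + q)) * ∑ jl, Fterm p q h M θ jl z) :=
    funext (fTheta_eq p q δ C0 h M θ)
  rw [this, integral_add (integrable_mul_prod integrable_ind_pi integrable_ind_pi)
    ((integrable_finset_sum _ (fun jl _ => integrable_Fterm hpos jl)).const_mul _),
    integral_const_mul,
    integral_mul_prod (fun x => ∏ r, ind01 (x r)) (fun y => ∏ s, ind01 (y s)),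
    integral_ind_pi, integral_ind_pi,
    integral_finset_sum _ (fun jl _ => integrable_Fterm hpos jl)]
  rw [Finset.sum_congr rfl (fun jl _ => integral_Fterm hpos hp jl)]
  simp

lemma marg1_eq (hq : 0 < q) (x : Fin p → ℝ) :
    marg1 p q (fTheta p q δ C0 h M θ) x = ∏ r, ind01 (x r) := by
  unfold marg1
  have : (fun y => fTheta p q δ C0 h M θ (x, y)) = fun y =>
      (∏ r, ind01 (x r)) * (∏ s, ind01 (y s)) +
        C0 * h ^ (δ + ((p : ℝ) + q)) *
          ∑ jl, (θ jl * ∏ r, gM h (jl.1 r) (x r)) * ∏ s, gM h (jl.2 s) (y s) := by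
    funext y
    rw [fTheta_eq]
    rfl
  rw [this, integral_add (integrable_ind_pi.const_mul _)
      (((integrable_finset_sum _
        (fun jl _ => (integrable_gM_pi hpos jl.2).const_mul _))).const_mul _),
    integral_const_mul, integral_const_mul, integral_ind_pi,
    integral_finset_sum _ (fun jl _ => (integrable_gM_pi hpos jl.2).const_mul _)]
  have : ∀ jl : (Fin p → Fin M) × (Fin q → Fin M),
      (∫ y : Fin q → ℝ, (θ jl * ∏ r, gM h (jl.1 r) (x r)) * ∏ s, gM h (jl.2 s) (y s)) = 0 := by
    intro jl
    rw [integral_const_mul, integral_gM_pi hpos hq jl.2, mul_zero]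
  rw [Finset.sum_congr rfl (fun jl _ => this jl)]
  simp

lemma marg2_eq (hp : 0 < p) (y : Fin q → ℝ) :
    marg2 p q (fTheta p q δ C0 h M θ) y = ∏ s, ind01 (y s) := by
  unfold marg2
  have : (fun x => fTheta p q δ C0 h M θ (x, y)) = fun x : Fin p → ℝ =>
      (∏ s, ind01 (y s)) * (∏ r, ind01 (x r)) +
        C0 * h ^ (δ + ((p : ℝ) + q)) *
          ∑ jl, (θ jl * ∏ s, gM h (jl.2 s) (y s)) * ∏ r, gM h (jl.1 r) (x r) := by
    funext x
    rw [fTheta_eq]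
    congr 1
    · ring
    · congr 1
      refine Finset.sum_congr rfl (fun jl _ => ?_)
      unfold Fterm
      ring
  rw [this, integral_add ((integrable_ind_pi).const_mul _)
      (((integrable_finset_sum _
        (fun jl _ => (integrable_gM_pi hpos jl.1).const_mul _))).const_mul _),
    integral_const_mul, integral_const_mul, integral_ind_pi,
    integral_finset_sum _ (fun jl _ => (integrable_gM_pi hpos jl.1).const_mul _)]
  have : ∀ jl : (Fin p → Fin M) × (Fin q → Fin M),
      (∫ x : Fin p → ℝ, (θ jl * ∏ s, gM h (jl.2 s) (y s)) * ∏ r, gM h (jl.1 r) (x r)) = 0 := by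
    intro jl
    rw [integral_const_mul, integral_gM_pi hpos hp jl.1, mul_zero]
  rw [Finset.sum_congr rfl (fun jl _ => this jl)]
  simp

end Main

section Psi

variable {p q : ℕ} {δ C0 h : ℝ} (hpos : 0 < h) {M : ℕ}
  {θ : (Fin p → Fin M) × (Fin q → Fin M) → ℝ}

include hpos

lemma psiOf_eq (hp : 0 < p) (hq : 0 < q) (z) :
    psiOf p q (fTheta p q δ C0 h M θ) z =
      C0 * h ^ (δ + ((p : ℝ) + q)) * ∑ jl, Fterm p q h M θ jl z := by
  unfold psiOf
  rw [marg1_eq hpos hq, marg2_eq hpos hp, fTheta_eq]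
  ring

lemma integral_psi_sq (hp : 0 < p) (hq : 0 < q) (hθ : ∀ jl, θ jl = 1 ∨ θ jl = -1) :
    (∫ z, psiOf p q (fTheta p q δ C0 h M θ) z ^ 2) =
      (C0 * h ^ (δ + ((p : ℝ) + q))) ^ 2 *
        ((M ^ p * M ^ q : ℕ) * ((1/h) * ∫ t, Gfun t ^ 2) ^ (p + q)) := by
  have heq : (fun z => psiOf p q (fTheta p q δ C0 h M θ) z ^ 2) = fun z =>
      (C0 * h ^ (δ + ((p : ℝ) + q))) ^ 2 *
        ∑ jl, ∑ jl', Fterm p q h M θ jl z * Fterm p q h M θ jl' z := by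
    funext z
    rw [psiOf_eq hpos hp hq, mul_pow, sq (∑ jl, Fterm p q h M θ jl z), Finset.sum_mul_sum]
  rw [heq, integral_const_mul,
    integral_finset_sum _ (fun jl _ =>
      integrable_finset_sum _ (fun jl' _ => integrable_Fterm_mul hpos jl jl'))]
  congr 1
  have hinner : ∀ jl : (Fin p → Fin M) × (Fin q → Fin M),
      (∫ z, ∑ jl', Fterm p q h M θ jl z * Fterm p q h M θ jl' z) =
        ((1/h) * ∫ t, Gfun t ^ 2) ^ (p + q) := by
    intro jl
    rw [integral_finset_sum _ (fun jl' _ => integrable_Fterm_mul hpos jl jl'),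
      Finset.sum_congr rfl (fun jl' _ => integral_Fterm_mul hpos hθ jl jl'),
      Finset.sum_ite_eq]
    rw [if_pos (Finset.mem_univ jl)]
  rw [Finset.sum_congr rfl (fun jl _ => hinner jl), Finset.sum_const, Finset.card_univ,
    Fintype.card_prod, Fintype.card_fun, Fintype.card_fun, Fintype.card_fin, Fintype.card_fin,
    Fintype.card_fin, nsmul_eq_mul]

end Psi


/-- Lemma 7 of the paper: properties of the alternatives `f_θ`.
If `C₀ ≤ min{1, R'−1}·e^{p+q}` then `f_θ` is a probability density with
`max{‖f_θ‖_∞, ‖f_{θ,1}‖_∞, ‖f_{θ,2}‖_∞} ≤ R'`; moreover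
`‖f_θ − f_{θ,1}⊗f_{θ,2}‖₂ = C₀·‖G‖₂^{p+q}·h^δ`. -/
theorem stmt15 (p q : ℕ) (hp : 0 < p) (hq : 0 < q)
    (δ R R' : ℝ) (hδ : 0 < δ) (hR : 0 < R) (hR' : 1 ≤ R')
    (M : ℕ) (hM : 0 < M) (h : ℝ) (hh : h = (M : ℝ)⁻¹)
    (C0 : ℝ) (hC0 : 0 < C0)
    (θ : (Fin p → Fin M) × (Fin q → Fin M) → ℝ) (hθ : ∀ jl, θ jl = 1 ∨ θ jl = -1) :
    (C0 ≤ min 1 (R' - 1) * Real.exp ((p : ℝ) + q) →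
      ((∀ z, 0 ≤ fTheta p q δ C0 h M θ z) ∧
       (∫ z, fTheta p q δ C0 h M θ z) = 1 ∧
       (∀ z, |fTheta p q δ C0 h M θ z| ≤ R') ∧
       (∀ x, |marg1 p q (fTheta p q δ C0 h M θ) x| ≤ R') ∧
       (∀ y, |marg2 p q (fTheta p q δ C0 h M θ) y| ≤ R'))) ∧
    Real.sqrt (∫ z, psiOf p q (fTheta p q δ C0 h M θ) z ^ 2) =
      C0 * (Real.sqrt (∫ t, Gfun t ^ 2)) ^ (p + q) * h ^ δ := by

  have hMpos : (0:ℝ) < M := by exact_mod_cast hM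
  have hpos : 0 < h := by rw [hh]; exact inv_pos.2 hMpos
  have hne : h ≠ 0 := hpos.ne'
  have hMh : (M : ℝ) * h = 1 := by rw [hh]; field_simp
  have hh1 : h ≤ 1 := by
    rw [hh]
    exact inv_le_one_of_one_le₀ (by exact_mod_cast hM)
  have hI2 : (0:ℝ) ≤ ∫ t, Gfun t ^ 2 := integral_nonneg (fun t => sq_nonneg _)
  have hsplit : h ^ (δ + ((p:ℝ) + q)) = h ^ δ * h ^ (p + q : ℕ) := by
    rw [Real.rpow_add hpos]
    congr 1
    rw [← Real.rpow_natCast h (p + q)]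
    congr 1
    push_cast
    ring
  have hrpowpos : 0 < h ^ δ := Real.rpow_pos_of_pos hpos δ
  have hrpow1 : h ^ δ ≤ 1 := Real.rpow_le_one hpos.le hh1 hδ.le
  constructor
  · intro hC0'
    have hm0 : 0 ≤ min 1 (R' - 1) := le_min one_pos.le (by linarith)
    -- key pointwise bound on the perturbation
    have hbd : ∀ z, |C0 * h ^ (δ + ((p:ℝ) + q)) * ∑ jl, Fterm p q h M θ jl z|
        ≤ min 1 (R' - 1) := by
      intro z
      rw [abs_mul, abs_of_pos (by positivity : (0:ℝ) < C0 * h ^ (δ + ((p:ℝ) + q)))]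
      calc C0 * h ^ (δ + ((p:ℝ) + q)) * |∑ jl, Fterm p q h M θ jl z|
          ≤ C0 * h ^ (δ + ((p:ℝ) + q)) * ((1/h) * Real.exp (-1)) ^ (p + q) :=
            mul_le_mul_of_nonneg_left (abs_sum_Fterm_le hpos hθ z) (by positivity)
        _ = C0 * h ^ δ * Real.exp (-1) ^ (p + q) := by
            rw [hsplit, mul_pow]
            have : h ^ (p + q) * (1/h) ^ (p + q) = 1 := by
              rw [← mul_pow, mul_one_div_cancel hne, one_pow]
            linear_combination (C0 * h ^ δ * Real.exp (-1) ^ (p + q)) * this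
        _ ≤ (min 1 (R' - 1) * Real.exp ((p:ℝ) + q)) * 1 * Real.exp (-1) ^ (p + q) := by
            apply mul_le_mul_of_nonneg_right _ (by positivity)
            calc C0 * h ^ δ ≤ (min 1 (R' - 1) * Real.exp ((p:ℝ) + q)) * h ^ δ :=
                  mul_le_mul_of_nonneg_right hC0' hrpowpos.le
              _ ≤ (min 1 (R' - 1) * Real.exp ((p:ℝ) + q)) * 1 := by
                  apply mul_le_mul_of_nonneg_left hrpow1 (by positivity)
              _ = (min 1 (R' - 1) * Real.exp ((p:ℝ) + q)) * 1 := rfl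
        _ = min 1 (R' - 1) := by
            rw [mul_one, ← Real.exp_nat_mul]
            rw [mul_assoc, ← Real.exp_add]
            push_cast
            ring_nf
            rw [Real.exp_zero, mul_one]
    have hindbd : ∀ z : (Fin p → ℝ) × (Fin q → ℝ),
        0 ≤ (∏ r, ind01 (z.1 r)) * (∏ s, ind01 (z.2 s)) ∧
          (∏ r, ind01 (z.1 r)) * (∏ s, ind01 (z.2 s)) ≤ 1 := by
      intro z
      constructor
      · exact mul_nonneg (Finset.prod_nonneg fun r _ => ind01_nonneg _)
          (Finset.prod_nonneg fun s _ => ind01_nonneg _)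
      · exact mul_le_one₀ (Finset.prod_le_one (fun r _ => ind01_nonneg _)
          (fun r _ => ind01_le_one _))
          (Finset.prod_nonneg fun s _ => ind01_nonneg _)
          (Finset.prod_le_one (fun s _ => ind01_nonneg _) (fun s _ => ind01_le_one _))
    refine ⟨?_, integral_fTheta hpos hp hq, ?_, ?_, ?_⟩
    · -- nonnegativity
      intro z
      rw [fTheta_eq]
      by_cases hS : (∑ jl, Fterm p q h M θ jl z) = 0
      · rw [hS, mul_zero, add_zero]
        exact (hindbd z).1
      · obtain ⟨jl, _, hjl⟩ := Finset.exists_ne_zero_of_sum_ne_zero hS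
        obtain ⟨hz1, hz2⟩ := Fterm_supp hpos hMh hjl
        rw [prod_ind01, prod_ind01, if_pos hz1, if_pos hz2, one_mul]
        have := hbd z
        have hmin1 : min 1 (R' - 1) ≤ 1 := min_le_left _ _
        have := neg_abs_le (C0 * h ^ (δ + ((p:ℝ) + q)) * ∑ jl, Fterm p q h M θ jl z)
        linarith
    · -- sup bound for fTheta
      intro z
      rw [fTheta_eq]
      have h1 := (abs_add_le ((∏ r, ind01 (z.1 r)) * (∏ s, ind01 (z.2 s)))
        (C0 * h ^ (δ + ((p:ℝ) + q)) * ∑ jl, Fterm p q h M θ jl z))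
      have h2 : |(∏ r, ind01 (z.1 r)) * (∏ s, ind01 (z.2 s))| ≤ 1 := by
        rw [abs_of_nonneg (hindbd z).1]
        exact (hindbd z).2
      have hmin2 : min 1 (R' - 1) ≤ R' - 1 := min_le_right _ _
      have := hbd z
      linarith
    · -- marginal 1
      intro x
      rw [marg1_eq hpos hq]
      rw [abs_of_nonneg (Finset.prod_nonneg fun r _ => ind01_nonneg _)]
      calc (∏ r, ind01 (x r)) ≤ 1 :=
            Finset.prod_le_one (fun r _ => ind01_nonneg _) (fun r _ => ind01_le_one _)
        _ ≤ R' := hR'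
    · -- marginal 2
      intro y
      rw [marg2_eq hpos hp]
      rw [abs_of_nonneg (Finset.prod_nonneg fun s _ => ind01_nonneg _)]
      calc (∏ s, ind01 (y s)) ≤ 1 :=
            Finset.prod_le_one (fun s _ => ind01_nonneg _) (fun s _ => ind01_le_one _)
        _ ≤ R' := hR'
  · -- the L² identity
    rw [integral_psi_sq hpos hp hq hθ]
    have hMr : (M : ℝ) = 1/h := by
      rw [eq_div_iff hne]
      exact hMh
    have e1 : Real.sqrt (∫ t, Gfun t ^ 2) ^ (p+q) * Real.sqrt (∫ t, Gfun t ^ 2) ^ (p+q)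
        = (∫ t, Gfun t ^ 2) ^ (p+q) := by
      rw [← mul_pow, Real.mul_self_sqrt hI2]
    have hinside : (C0 * h ^ (δ + ((p:ℝ) + q))) ^ 2 *
        (((M ^ p * M ^ q : ℕ) : ℝ) * ((1/h) * ∫ t, Gfun t ^ 2) ^ (p + q)) =
        (C0 * Real.sqrt (∫ t, Gfun t ^ 2) ^ (p + q) * h ^ δ) ^ 2 := by
      rw [hsplit]
      push_cast
      rw [hMr]
      have hkey : ((1/h) ^ p * (1/h) ^ q) * ((h ^ (p+q)) ^ 2 * ((1/h) * ∫ t, Gfun t ^ 2) ^ (p + q))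
          = (∫ t, Gfun t ^ 2) ^ (p + q) := by
        rw [mul_pow (1/h)]
        have a1 : (1/h) ^ p * (1/h) ^ q = (1/h) ^ (p + q) := by rw [pow_add]
        rw [a1, sq]
        have a2 : ∀ k : ℕ, (1/h) ^ k * h ^ k = 1 := by
          intro k
          rw [← mul_pow, one_div_mul_cancel hne, one_pow]
        calc (1/h) ^ (p+q) * (h ^ (p+q) * h ^ (p+q) * ((1/h) ^ (p+q) * (∫ t, Gfun t ^ 2) ^ (p+q)))
            = ((1/h) ^ (p+q) * h ^ (p+q)) * ((1/h) ^ (p+q) * h ^ (p+q)) *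
              (∫ t, Gfun t ^ 2) ^ (p+q) := by ring
          _ = (∫ t, Gfun t ^ 2) ^ (p+q) := by rw [a2]; ring
      calc (C0 * (h ^ δ * h ^ (p+q))) ^ 2 *
            ((1/h) ^ p * (1/h) ^ q * ((1/h) * ∫ t, Gfun t ^ 2) ^ (p + q))
          = C0 ^ 2 * (h ^ δ) ^ 2 *
            (((1/h) ^ p * (1/h) ^ q) * ((h ^ (p+q)) ^ 2 * ((1/h) * ∫ t, Gfun t ^ 2) ^ (p + q))) := by
            ring
        _ = C0 ^ 2 * (h ^ δ) ^ 2 * (∫ t, Gfun t ^ 2) ^ (p + q) := by rw [hkey]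
        _ = (C0 * Real.sqrt (∫ t, Gfun t ^ 2) ^ (p + q) * h ^ δ) ^ 2 := by
            rw [← e1]
            ring
    rw [hinside, Real.sqrt_sq]
    exact mul_nonneg (mul_nonneg hC0.le (pow_nonneg (Real.sqrt_nonneg _) _))
      (Real.rpow_nonneg hpos.le δ)
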